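/- Let γ ∈ (-2, 0) and let a(v) = |v|^{2+γ}(I − (v⊗v)/|v|²) for v ≠ 0 and a(0)=0, and φ_η(x) = (3/(4πη³)) 1_{|x|<η}. Then there is a constant C > 0 (depending only on γ) such that for all η ∈ (0,1) and all v ∈ ℝ³, ‖(a ⋆ φ_η)(v) − a(v)‖ ≤ C η² (η + |v|)^γ. -/

import Mathlib

open Matrix MeasureTheory

noncomputable section

/-- Frobenius norm of a 3×3 real matrix. -/
def frob (M : Matrix (Fin 3) (Fin 3) ℝ) : ℝ := Real.sqrt (Matrix.trace (M * Mᵀ))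

/-- The matrix `a(v) = |v|^γ (|v|² I − v ⊗ v)` (which equals
`|v|^{2+γ}(I − (v⊗v)/|v|²)` for `v ≠ 0`, and `0` at `v = 0` since `γ < 0`). -/
def aMat (γ : ℝ) (v : EuclideanSpace ℝ (Fin 3)) : Matrix (Fin 3) (Fin 3) ℝ :=
  ‖v‖ ^ γ •
    (‖v‖ ^ 2 • (1 : Matrix (Fin 3) (Fin 3) ℝ) - Matrix.of fun i j => v i * v j)

/-- The uniform mollifier `φ_η(x) = (3/(4πη³)) 1_{|x|<η}`. -/
def phiMol (η : ℝ) (x : EuclideanSpace ℝ (Fin 3)) : ℝ :=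
  if ‖x‖ < η then 3 / (4 * Real.pi * η ^ 3) else 0

/-- The (entrywise) convolution `(a ⋆ φ_η)(v)`. -/
def aConv (γ η : ℝ) (v : EuclideanSpace ℝ (Fin 3)) : Matrix (Fin 3) (Fin 3) ℝ :=
  Matrix.of fun i j => ∫ x, phiMol η x * aMat γ (v - x) i j

lemma phi_nonneg (η : ℝ) (x : EuclideanSpace ℝ (Fin 3)) : 0 ≤ phiMol η x := by
  unfold phiMol
  split
  · by_cases h : 0 < η
    · positivity
    · rename_i hx
      exfalso; exact h (lt_of_le_of_lt (norm_nonneg _) hx)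
  · exact le_rfl

lemma phi_le (η : ℝ) (hη : 0 < η) (x : EuclideanSpace ℝ (Fin 3)) :
    phiMol η x ≤ 3 / (4 * Real.pi * η ^ 3) := by
  unfold phiMol
  split
  · exact le_rfl
  · positivity

lemma aMat_apply (γ : ℝ) (w : EuclideanSpace ℝ (Fin 3)) (i j : Fin 3) :
    aMat γ w i j = ‖w‖ ^ γ * (‖w‖ ^ 2 * (if i = j then 1 else 0) - w i * w j) := by
  simp [aMat, Matrix.smul_apply, Matrix.sub_apply, Matrix.one_apply, smul_eq_mul]

lemma coord_abs_le_norm' (w : EuclideanSpace ℝ (Fin 3)) (i : Fin 3) : |w i| ≤ ‖w‖ := by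
  have h1 : ‖w i‖^2 ≤ ∑ k, ‖w k‖ ^ 2 :=
    Finset.single_le_sum (f := fun k => ‖w k‖^2) (fun k _ => by positivity) (Finset.mem_univ i)
  calc |w i| = Real.sqrt ((w i)^2) := (Real.sqrt_sq_eq_abs _).symm
    _ ≤ Real.sqrt (∑ k, ‖w k‖ ^ 2) := Real.sqrt_le_sqrt (by simpa [Real.norm_eq_abs, sq_abs] using h1)
    _ = ‖w‖ := (EuclideanSpace.norm_eq w).symm

lemma aMat_abs_le (γ : ℝ) (hγ : γ ≠ 0) (w : EuclideanSpace ℝ (Fin 3)) (i j : Fin 3) :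
    |aMat γ w i j| ≤ 2 * ‖w‖ ^ (2 + γ) := by
  rcases eq_or_ne w 0 with rfl | hw
  · simp [aMat_apply, Real.zero_rpow hγ]
    positivity
  have hwpos : 0 < ‖w‖ := norm_pos_iff.mpr hw
  rw [aMat_apply]
  have h2 : |‖w‖ ^ 2 * (if i = j then (1:ℝ) else 0) - w i * w j| ≤ 2 * ‖w‖^2 := by
    have hi := coord_abs_le_norm' w i
    have hj := coord_abs_le_norm' w j
    have h0 : (0:ℝ) ≤ ‖w‖ := norm_nonneg w
    have habs : |w i * w j| ≤ ‖w‖ * ‖w‖ := by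
      rw [abs_mul]; exact mul_le_mul hi hj (abs_nonneg _) h0
    have hprod := abs_le.mp habs
    rw [abs_le]
    constructor <;> split <;> nlinarith [hprod.1, hprod.2]
  calc |‖w‖ ^ γ * (‖w‖ ^ 2 * (if i = j then (1:ℝ) else 0) - w i * w j)|
      = ‖w‖ ^ γ * |‖w‖ ^ 2 * (if i = j then (1:ℝ) else 0) - w i * w j| := by
        rw [abs_mul, abs_of_nonneg (Real.rpow_nonneg (norm_nonneg _) _)]
    _ ≤ ‖w‖ ^ γ * (2 * ‖w‖^2) := by
        gcongr
    _ = 2 * ‖w‖ ^ (2 + γ) := by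
        rw [Real.rpow_add hwpos, ← Real.rpow_natCast ‖w‖ 2]
        norm_num
        ring

lemma phi_eq_indicator (η : ℝ) :
    phiMol η = Set.indicator (Metric.ball (0:EuclideanSpace ℝ (Fin 3)) η)
      (fun _ => 3 / (4 * Real.pi * η ^ 3)) := by
  ext x
  simp [phiMol, Set.indicator, Metric.mem_ball, dist_eq_norm]

lemma gamma_five_half : Real.Gamma ((3:ℝ)/2 + 1) = 3/4 * Real.sqrt Real.pi := by
  rw [Real.Gamma_add_one (by norm_num)]
  have : (3:ℝ)/2 = 1/2 + 1 := by norm_num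
  rw [this, Real.Gamma_add_one (by norm_num), Real.Gamma_one_half_eq]
  ring

lemma volume_ball_toReal (η : ℝ) (hη : 0 < η) :
    (volume (Metric.ball (0:EuclideanSpace ℝ (Fin 3)) η)).toReal
      = 4/3 * Real.pi * η ^ 3 := by
  rw [EuclideanSpace.volume_ball]
  have hcard : Fintype.card (Fin 3) = 3 := by simp
  rw [hcard]
  have hπ : (0:ℝ) < Real.pi := Real.pi_pos
  have hsπ : (0:ℝ) < Real.sqrt Real.pi := Real.sqrt_pos.mpr hπ
  have h1 : ((3:ℕ):ℝ)/2 + 1 = (3:ℝ)/2 + 1 := by norm_num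
  rw [h1, gamma_five_half]
  rw [ENNReal.toReal_mul, ← ENNReal.ofReal_pow hη.le, ENNReal.toReal_ofReal (by positivity),
    ENNReal.toReal_ofReal (by positivity)]
  have hs2 : Real.sqrt Real.pi ^ 3 = Real.pi * Real.sqrt Real.pi := by
    have := Real.sq_sqrt hπ.le
    nlinarith [this]
  rw [hs2]
  field_simp

lemma integral_phi (η : ℝ) (hη : 0 < η) : ∫ x, phiMol η x = 1 := by
  rw [phi_eq_indicator]
  rw [MeasureTheory.integral_indicator_const _ measurableSet_ball]
  rw [smul_eq_mul, measureReal_def, volume_ball_toReal η hη]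
  have hπ : (0:ℝ) < Real.pi := Real.pi_pos
  field_simp

lemma frob_le (M : Matrix (Fin 3) (Fin 3) ℝ) (K : ℝ) (hK : 0 ≤ K)
    (h : ∀ i j, |M i j| ≤ K) : frob M ≤ 3 * K := by
  have htr : Matrix.trace (M * Mᵀ) = ∑ i, ∑ j, (M i j)^2 := by
    simp [Matrix.trace, Matrix.mul_apply, Matrix.diag, sq]
  have hle : Matrix.trace (M * Mᵀ) ≤ ∑ _i : Fin 3, ∑ _j : Fin 3, K^2 := by
    rw [htr]
    refine Finset.sum_le_sum fun i _ => Finset.sum_le_sum fun j _ => ?_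
    have := h i j
    nlinarith [h i j, abs_nonneg (M i j), sq_abs (M i j)]
  have h9 : (∑ _i : Fin 3, ∑ _j : Fin 3, K^2) = 9 * K^2 := by
    simp; ring
  unfold frob
  calc Real.sqrt (Matrix.trace (M * Mᵀ)) ≤ Real.sqrt (9 * K^2) := by
        apply Real.sqrt_le_sqrt; rw [← h9]; exact hle
    _ = 3 * K := by
        rw [show (9:ℝ) * K^2 = (3*K)^2 by ring, Real.sqrt_sq (by positivity)]

lemma coord_abs_le_norm (w : EuclideanSpace ℝ (Fin 3)) (i : Fin 3) : |w i| ≤ ‖w‖ := by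
  have h := EuclideanSpace.norm_eq w
  have h1 : w i ^ 2 ≤ ∑ k, ‖w k‖ ^ 2 := by
    have : ‖w i‖^2 ≤ ∑ k, ‖w k‖ ^ 2 :=
      Finset.single_le_sum (f := fun k => ‖w k‖^2) (fun k _ => by positivity) (Finset.mem_univ i)
    simpa [Real.norm_eq_abs, sq_abs] using this
  calc |w i| = Real.sqrt ((w i)^2) := (Real.sqrt_sq_eq_abs _).symm
    _ ≤ Real.sqrt (∑ k, ‖w k‖ ^ 2) := Real.sqrt_le_sqrt h1
    _ = ‖w‖ := h.symm

/-- odd integrand against even mollifier integrates to zero -/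
lemma integral_odd_eq_zero (f : EuclideanSpace ℝ (Fin 3) → ℝ)
    (hf : ∀ x, f (-x) = - f x) : ∫ x, f x = 0 := by
  have h := integral_neg_eq_self f (volume : Measure (EuclideanSpace ℝ (Fin 3)))
  simp only [hf] at h
  rw [integral_neg] at h
  linarith

/-- 1-D second-order Taylor bound with constant 1. -/
lemma taylor_bound (F F' F'' : ℝ → ℝ) (M : ℝ)
    (hF : ∀ t ∈ Set.Icc (0:ℝ) 1, HasDerivAt F (F' t) t)
    (hF' : ∀ t ∈ Set.Icc (0:ℝ) 1, HasDerivAt F' (F'' t) t)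
    (hb : ∀ t ∈ Set.Icc (0:ℝ) 1, |F'' t| ≤ M) :
    |F 1 - F 0 - F' 0| ≤ M := by
  have hM : 0 ≤ M := le_trans (abs_nonneg _) (hb 0 (by norm_num))
  have key : ∀ t ∈ Set.Icc (0:ℝ) 1, ‖F' t - F' 0‖ ≤ M * (t - 0) := by
    apply norm_image_sub_le_of_norm_deriv_le_segment'
    · exact fun t ht => (hF' t ht).hasDerivWithinAt
    · exact fun t ht => by simpa [Real.norm_eq_abs] using hb t (Set.mem_Icc.mpr ⟨ht.1, ht.2.le⟩)
  set G : ℝ → ℝ := fun t => F t - t * F' 0 with hG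
  have hGd : ∀ t ∈ Set.Icc (0:ℝ) 1, HasDerivWithinAt G (F' t - F' 0) (Set.Icc 0 1) t := by
    intro t ht
    have h1 : HasDerivAt (fun y => y * F' 0) (F' 0) t := by
      simpa using (hasDerivAt_id t).mul_const (F' 0)
    exact ((hF t ht).sub h1).hasDerivWithinAt
  have h2 : ∀ t ∈ Set.Icc (0:ℝ) 1, ‖G t - G 0‖ ≤ M * (t - 0) := by
    apply norm_image_sub_le_of_norm_deriv_le_segment' hGd
    intro t ht
    calc ‖F' t - F' 0‖ ≤ M * (t - 0) := key t (Set.mem_Icc.mpr ⟨ht.1, ht.2.le⟩)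
      _ ≤ M := by nlinarith [ht.1, ht.2]
  have := h2 1 (by norm_num)
  simp only [hG] at this
  have : ‖F 1 - 1 * F' 0 - (F 0 - 0 * F' 0)‖ ≤ M * (1 - 0) := this
  rw [Real.norm_eq_abs] at this
  calc |F 1 - F 0 - F' 0| = |F 1 - 1 * F' 0 - (F 0 - 0 * F' 0)| := by ring_nf
    _ ≤ M * (1-0) := this
    _ = M := by ring

lemma phi_measurable (η : ℝ) : Measurable (phiMol η) := by
  unfold phiMol
  apply Measurable.ite _ measurable_const measurable_const
  have : {x : EuclideanSpace ℝ (Fin 3) | ‖x‖ < η} = Metric.ball 0 η := by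
    ext x; simp [Metric.mem_ball, dist_eq_norm]
  rw [show {a : EuclideanSpace ℝ (Fin 3) | ‖a‖ < η} = Metric.ball 0 η from this]
  exact measurableSet_ball

lemma measurable_norm_rpow (γ : ℝ) (hγ : γ ≠ 0) (v : EuclideanSpace ℝ (Fin 3)) :
    Measurable fun x : EuclideanSpace ℝ (Fin 3) => ‖v - x‖ ^ γ := by
  have hg : Measurable fun r : ℝ => if r = 0 then (0:ℝ) else Real.exp (Real.log r * γ) := by
    apply Measurable.ite (measurableSet_eq) measurable_const
    exact Real.measurable_exp.comp (Real.measurable_log.mul measurable_const)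
  have heq : (fun x : EuclideanSpace ℝ (Fin 3) => ‖v - x‖ ^ γ)
      = fun x => (fun r : ℝ => if r = 0 then (0:ℝ) else Real.exp (Real.log r * γ)) ‖v - x‖ := by
    funext x
    by_cases h : ‖v - x‖ = 0
    · simp [h, Real.zero_rpow hγ]
    · have hpos : 0 < ‖v - x‖ := lt_of_le_of_ne (norm_nonneg _) (Ne.symm h)
      simp [h, Real.rpow_def_of_pos hpos]
  rw [heq]
  exact hg.comp (continuous_const.sub continuous_id).norm.measurable

lemma aMat_entry_measurable (γ : ℝ) (hγ : γ ≠ 0) (v : EuclideanSpace ℝ (Fin 3)) (i j : Fin 3) :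
    Measurable (fun x : EuclideanSpace ℝ (Fin 3) => aMat γ (v - x) i j) := by
  have hsub : Continuous (fun x : EuclideanSpace ℝ (Fin 3) => v - x) :=
    continuous_const.sub continuous_id
  have hcoord : ∀ k : Fin 3, Continuous (fun x : EuclideanSpace ℝ (Fin 3) => (v - x) k) :=
    fun k => (EuclideanSpace.proj k).continuous.comp hsub
  simp only [aMat, Matrix.smul_apply, Matrix.sub_apply, Matrix.one_apply, Matrix.of_apply,
    smul_eq_mul]
  exact (measurable_norm_rpow γ hγ v).mul ((((hsub.norm.pow 2).measurable).mul
    measurable_const).sub (((hcoord i).mul (hcoord j)).measurable))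

lemma integrable_phi_mul (η : ℝ) (hη : 0 < η) (g : EuclideanSpace ℝ (Fin 3) → ℝ)
    (hg : Measurable g) (K : ℝ) (hK : ∀ x, ‖x‖ < η → |g x| ≤ K) :
    Integrable (fun x => phiMol η x * g x) := by
  set f : EuclideanSpace ℝ (Fin 3) → ℝ := fun x => phiMol η x * g x with hf
  have heq : f = Set.indicator (Metric.ball (0:EuclideanSpace ℝ (Fin 3)) η) f := by
    ext x
    by_cases h : ‖x‖ < η
    · rw [Set.indicator_of_mem (by simpa [Metric.mem_ball, dist_eq_norm] using h)]
    · rw [Set.indicator_of_notMem (by simpa [Metric.mem_ball, dist_eq_norm] using h)]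
      simp [hf, phiMol, h]
  rw [heq, integrable_indicator_iff measurableSet_ball]
  refine Measure.integrableOn_of_bounded (M := 3 / (4 * Real.pi * η ^ 3) * K) ?_ ?_ ?_
  · exact (measure_ball_lt_top).ne
  · exact ((phi_measurable η).mul hg).aestronglyMeasurable
  · filter_upwards [ae_restrict_mem measurableSet_ball] with x hx
    have hx' : ‖x‖ < η := by simpa [Metric.mem_ball, dist_eq_norm] using hx
    have h1 : 0 ≤ phiMol η x := phi_nonneg η x
    have h2 : phiMol η x ≤ 3 / (4 * Real.pi * η ^ 3) := by
      unfold phiMol; split <;> first | exact le_rfl | positivity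
    rw [Real.norm_eq_abs, hf]
    dsimp only
    rw [abs_mul, abs_of_nonneg h1]
    exact mul_le_mul h2 (hK x hx') (abs_nonneg _) (by positivity)

lemma abs_integral_phi_mul_le (η : ℝ) (hη : 0 < η) (h : EuclideanSpace ℝ (Fin 3) → ℝ)
    (hh : Measurable h) (M : ℝ) (hM : ∀ x, ‖x‖ < η → |h x| ≤ M) :
    |∫ x, phiMol η x * h x| ≤ M := by
  have hM0 : 0 ≤ M := le_trans (abs_nonneg _) (hM 0 (by simpa using hη))
  have hint : Integrable (fun x => phiMol η x * h x) := integrable_phi_mul η hη h hh M hM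
  have hintM : Integrable (fun x => phiMol η x * M) :=
    integrable_phi_mul η hη (fun _ => M) measurable_const M (fun x _ => by
      rw [abs_of_nonneg hM0])
  calc |∫ x, phiMol η x * h x| ≤ ∫ x, |phiMol η x * h x| := by
        exact norm_integral_le_integral_norm (fun x => phiMol η x * h x)
    _ ≤ ∫ x, phiMol η x * M := by
        apply integral_mono hint.abs hintM
        intro x
        dsimp only
        rw [abs_mul, abs_of_nonneg (phi_nonneg η x)]
        by_cases hx : ‖x‖ < η
        · exact mul_le_mul_of_nonneg_left (hM x hx) (phi_nonneg η x)
        · simp [phiMol, hx]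
    _ = M := by
        rw [integral_mul_const, integral_phi η hη, one_mul]

lemma rpow_base_le (γ : ℝ) (hγ1 : -2 ≤ γ) (hγ2 : γ ≤ 0) (s u : ℝ) (hs : 0 < s)
    (hu : 0 < u) (h : u ≤ 3 * s) : s ^ γ ≤ 9 * u ^ γ := by
  have h1 : u / 3 ≤ s := by linarith
  have h2 : (0:ℝ) < u / 3 := by linarith
  have h3 : s ^ γ ≤ (u/3) ^ γ := Real.rpow_le_rpow_of_nonpos h2 h1 hγ2
  have h4 : (u/3) ^ γ = u ^ γ * (3:ℝ) ^ (-γ) := by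
    rw [Real.div_rpow hu.le (by norm_num), Real.rpow_neg (by norm_num)]
    field_simp
  have h5 : (3:ℝ) ^ (-γ) ≤ 9 := by
    calc (3:ℝ) ^ (-γ) ≤ (3:ℝ) ^ (2:ℝ) :=
          Real.rpow_le_rpow_of_exponent_le (by norm_num) (by linarith)
      _ = 9 := by
          rw [show (2:ℝ) = ((2:ℕ):ℝ) by norm_num, Real.rpow_natCast]; norm_num
  have hu' : 0 ≤ u ^ γ := Real.rpow_nonneg hu.le γ
  calc s ^ γ ≤ u ^ γ * (3:ℝ)^(-γ) := h4 ▸ h3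
    _ ≤ u ^ γ * 9 := by nlinarith
    _ = 9 * u ^ γ := by ring

lemma abs_mul_le_mul {a b A B : ℝ} (ha : |a| ≤ A) (hb : |b| ≤ B) : |a*b| ≤ A*B := by
  rw [abs_mul]
  exact mul_le_mul ha hb (abs_nonneg _) (le_trans (abs_nonneg _) ha)

lemma aMat_apply' (γ : ℝ) (w : EuclideanSpace ℝ (Fin 3)) (i j : Fin 3) :
    aMat γ w i j = ‖w‖ ^ γ * (‖w‖ ^ 2 * (if i = j then 1 else 0) - w i * w j) := by
  simp [aMat, Matrix.smul_apply, Matrix.sub_apply, Matrix.one_apply, smul_eq_mul]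

namespace St4

def dd (i j : Fin 3) : ℝ := if i = j then 1 else 0

variable (γ : ℝ) (v x : EuclideanSpace ℝ (Fin 3)) (i j : Fin 3)

def Sf (t : ℝ) : ℝ := ‖v‖^2 - 2*t*(inner ℝ v x : ℝ) + t^2*‖x‖^2
def Sd (t : ℝ) : ℝ := -2*(inner ℝ v x : ℝ) + 2*t*‖x‖^2
def Pf (t : ℝ) : ℝ := Sf v x t * dd i j - (v i - t * x i) * (v j - t * x j)
def Pd (t : ℝ) : ℝ := Sd v x t * dd i j + (x i * (v j - t * x j) + (v i - t * x i) * x j)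
def Pdd : ℝ := 2*‖x‖^2 * dd i j - 2*(x i * x j)
def Ff (t : ℝ) : ℝ := (Sf v x t)^(γ/2) * Pf v x i j t
def Fd (t : ℝ) : ℝ := (γ/2) * (Sf v x t)^(γ/2-1) * Sd v x t * Pf v x i j t
  + (Sf v x t)^(γ/2) * Pd v x i j t
def Fdd (t : ℝ) : ℝ :=
  (γ/2)*(γ/2-1)*(Sf v x t)^(γ/2-1-1)*(Sd v x t)*(Sd v x t)*(Pf v x i j t)
  + (γ/2)*(Sf v x t)^(γ/2-1)*(2*‖x‖^2)*(Pf v x i j t)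
  + 2*((γ/2)*(Sf v x t)^(γ/2-1)*(Sd v x t))*(Pd v x i j t)
  + (Sf v x t)^(γ/2)*(Pdd x i j)

lemma coord_sub_smul (t : ℝ) (k : Fin 3) : (v - t • x) k = v k - t * x k := by
  simp [PiLp.sub_apply, PiLp.smul_apply, smul_eq_mul]

lemma Sf_eq (t : ℝ) : Sf v x t = ‖v - t • x‖^2 := by
  rw [norm_sub_sq_real, real_inner_smul_right, norm_smul]
  simp [Sf, mul_pow, sq_abs]
  ring

lemma Sd_inner (t : ℝ) : Sd v x t = -2 * (inner ℝ (v - t • x) x : ℝ) := by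
  rw [inner_sub_left, real_inner_smul_left, real_inner_self_eq_norm_sq]
  simp [Sd]
  ring

lemma Ff_eq (t : ℝ) : Ff γ v x i j t = aMat γ (v - t • x) i j := by
  rw [aMat_apply', Ff, Pf, Sf_eq, coord_sub_smul, coord_sub_smul]
  have h : (‖v - t • x‖^2)^(γ/2) = ‖v - t • x‖^γ := by
    rw [← Real.rpow_natCast ‖v - t • x‖ 2, ← Real.rpow_mul (norm_nonneg _)]
    norm_num
    congr 1
    ring
  rw [h, dd]

lemma hasDerivAt_Sf (t : ℝ) : HasDerivAt (Sf v x) (Sd v x t) t := by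
  have h1 : HasDerivAt (fun t : ℝ => 2*t*(inner ℝ v x : ℝ)) (2*(inner ℝ v x : ℝ)) t := by
    simpa using ((hasDerivAt_id t).const_mul 2).mul_const (inner ℝ v x : ℝ)
  have h2 : HasDerivAt (fun t : ℝ => t^2*‖x‖^2) (2*t*‖x‖^2) t := by
    have := (hasDerivAt_pow 2 t).mul_const (‖x‖^2)
    simpa using this
  have := ((hasDerivAt_const t (‖v‖^2)).sub h1).add h2
  exact this.congr_deriv (by unfold Sd; ring)

lemma hasDerivAt_Sd (t : ℝ) : HasDerivAt (Sd v x) (2*‖x‖^2) t := by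
  have h1 : HasDerivAt (fun t : ℝ => 2*t*‖x‖^2) (2*‖x‖^2) t := by
    simpa using ((hasDerivAt_id t).const_mul 2).mul_const (‖x‖^2)
  have := (hasDerivAt_const t (-2*(inner ℝ v x : ℝ))).add h1
  exact this.congr_deriv (by ring)

lemma hasDerivAt_coord (t : ℝ) (k : Fin 3) :
    HasDerivAt (fun t : ℝ => v k - t * x k) (-(x k)) t := by
  have h := (hasDerivAt_const t (v k)).sub ((hasDerivAt_id t).mul_const (x k))
  simp only [id_eq, one_mul, zero_sub] at h
  exact h

lemma hasDerivAt_Pf (t : ℝ) : HasDerivAt (Pf v x i j) (Pd v x i j t) t := by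
  have h := ((hasDerivAt_Sf v x t).mul_const (dd i j)).sub
    ((hasDerivAt_coord v x t i).mul (hasDerivAt_coord v x t j))
  exact h.congr_deriv (by unfold Pd; ring)

lemma hasDerivAt_Pd (t : ℝ) : HasDerivAt (Pd v x i j) (Pdd x i j) t := by
  have h := ((hasDerivAt_Sd v x t).mul_const (dd i j)).add
    (((hasDerivAt_const t (x i)).mul (hasDerivAt_coord v x t j)).add
      ((hasDerivAt_coord v x t i).mul (hasDerivAt_const t (x j))))
  exact h.congr_deriv (by unfold Pdd; ring)

lemma hasDerivAt_Ff (t : ℝ) (hS : Sf v x t ≠ 0) :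
    HasDerivAt (Ff γ v x i j) (Fd γ v x i j t) t := by
  have hr : HasDerivAt (fun t => (Sf v x t)^(γ/2)) (Sd v x t * (γ/2) * (Sf v x t)^(γ/2-1)) t :=
    (hasDerivAt_Sf v x t).rpow_const (Or.inl hS)
  have := hr.mul (hasDerivAt_Pf v x i j t)
  exact this.congr_deriv (by unfold Fd; ring)

lemma hasDerivAt_Fd (t : ℝ) (hS : Sf v x t ≠ 0) :
    HasDerivAt (Fd γ v x i j) (Fdd γ v x i j t) t := by
  have hr1 : HasDerivAt (fun t => (Sf v x t)^(γ/2-1))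
      (Sd v x t * (γ/2-1) * (Sf v x t)^(γ/2-1-1)) t :=
    (hasDerivAt_Sf v x t).rpow_const (Or.inl hS)
  have hr : HasDerivAt (fun t => (Sf v x t)^(γ/2)) (Sd v x t * (γ/2) * (Sf v x t)^(γ/2-1)) t :=
    (hasDerivAt_Sf v x t).rpow_const (Or.inl hS)
  have hg1 := hr1.const_mul (γ/2)
  have hg2 := hg1.mul (hasDerivAt_Sd v x t)
  have hg3 := hg2.mul (hasDerivAt_Pf v x i j t)
  have hg4 := hr.mul (hasDerivAt_Pd v x i j t)
  have := hg3.add hg4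
  exact this.congr_deriv (by unfold Fdd Pdd; simp only [Pi.mul_apply]; ring)



lemma dd_bounds (i j : Fin 3) : 0 ≤ dd i j ∧ dd i j ≤ 1 := by
  unfold dd; split <;> norm_num

lemma Sd_abs_le (t : ℝ) : |Sd v x t| ≤ 2 * ‖v - t • x‖ * ‖x‖ := by
  rw [Sd_inner]
  rw [abs_mul]
  calc |(-2:ℝ)| * |(inner ℝ (v - t • x) x : ℝ)| = 2 * |(inner ℝ (v - t • x) x : ℝ)| := by
        norm_num
    _ ≤ 2 * (‖v - t • x‖ * ‖x‖) := by
        have := abs_real_inner_le_norm (v - t • x) x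
        linarith
    _ = 2 * ‖v - t • x‖ * ‖x‖ := by ring

lemma Pf_abs_le (t : ℝ) : |Pf v x i j t| ≤ 2 * ‖v - t • x‖^2 := by
  have hi := coord_abs_le_norm' (v - t • x) i
  have hj := coord_abs_le_norm' (v - t • x) j
  rw [coord_sub_smul] at hi
  rw [coord_sub_smul] at hj
  have hd := dd_bounds i j
  have habs := abs_mul_le_mul hi hj
  have hp := abs_le.mp habs
  have hn : (0:ℝ) ≤ ‖v - t • x‖ := norm_nonneg _
  have e : ‖v - t • x‖^2 = ‖v - t • x‖ * ‖v - t • x‖ := sq ‖v - t • x‖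
  unfold Pf
  rw [Sf_eq, abs_le]
  constructor <;> nlinarith [hd.1, hd.2, hp.1, hp.2, sq_nonneg ‖v - t • x‖]

lemma Pd_abs_le (t : ℝ) : |Pd v x i j t| ≤ 4 * ‖v - t • x‖ * ‖x‖ := by
  have hi := coord_abs_le_norm' (v - t • x) i
  have hj := coord_abs_le_norm' (v - t • x) j
  rw [coord_sub_smul] at hi
  rw [coord_sub_smul] at hj
  have hxi := coord_abs_le_norm' x i
  have hxj := coord_abs_le_norm' x j
  have hdabs : |dd i j| ≤ 1 := by unfold dd; split <;> norm_num
  have h1 : |Sd v x t * dd i j| ≤ 2 * ‖v - t • x‖ * ‖x‖ := by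
    have := abs_mul_le_mul (Sd_abs_le v x t) hdabs
    simpa using this
  have h2 : |x i * (v j - t * x j)| ≤ ‖x‖ * ‖v - t • x‖ := abs_mul_le_mul hxi hj
  have h3 : |(v i - t * x i) * x j| ≤ ‖v - t • x‖ * ‖x‖ := abs_mul_le_mul hi hxj
  have h4 : |Pd v x i j t| ≤ |Sd v x t * dd i j|
      + (|x i * (v j - t * x j)| + |(v i - t * x i) * x j|) := by
    unfold Pd
    exact (abs_add_le _ _).trans (add_le_add le_rfl (abs_add_le _ _))
  nlinarith [h1, h2, h3, h4]

lemma Pdd_abs_le : |Pdd x i j| ≤ 4 * ‖x‖^2 := by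
  have hxi := coord_abs_le_norm' x i
  have hxj := coord_abs_le_norm' x j
  have hd := dd_bounds i j
  have habs := abs_mul_le_mul hxi hxj
  have hp := abs_le.mp habs
  have e : ‖x‖^2 = ‖x‖ * ‖x‖ := sq ‖x‖
  unfold Pdd
  rw [abs_le]
  constructor <;> nlinarith [hd.1, hd.2, hp.1, hp.2, sq_nonneg ‖x‖]

lemma Fdd_abs_le (hγ1 : -2 < γ) (hγ2 : γ < 0) (t : ℝ) (ρ : ℝ) (hρ : 0 < ρ)
    (hr : ρ ≤ ‖v - t • x‖) :
    |Fdd γ v x i j t| ≤ 40 * ‖x‖^2 * ‖v - t • x‖^γ := by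
  set r := ‖v - t • x‖ with hrdef
  set X := ‖x‖ with hXdef
  have hrpos : 0 < r := lt_of_lt_of_le hρ hr
  have hX0 : 0 ≤ X := norm_nonneg _
  have hS : Sf v x t = r^2 := Sf_eq v x t
  have key : ∀ e : ℝ, (Sf v x t)^e = r^(2*e) := by
    intro e
    rw [hS, ← Real.rpow_natCast r 2, ← Real.rpow_mul hrpos.le]
    norm_num
  have k1 : (Sf v x t)^(γ/2) = r^γ := by rw [key]; congr 1; ring
  have k2 : (Sf v x t)^(γ/2-1) = r^(γ-2) := by rw [key]; congr 1; ring
  have k3 : (Sf v x t)^(γ/2-1-1) = r^(γ-4) := by rw [key]; congr 1; ring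
  have e2 : r^(γ-2) * r^2 = r^γ := by
    rw [← Real.rpow_natCast r 2, ← Real.rpow_add hrpos]
    congr 1; push_cast; ring
  have e4 : r^(γ-4) * r^4 = r^γ := by
    rw [← Real.rpow_natCast r 4, ← Real.rpow_add hrpos]
    congr 1; push_cast; ring
  have hg1 : |γ/2| ≤ 1 := by rw [abs_le]; constructor <;> linarith
  have hg2 : |γ/2-1| ≤ 2 := by rw [abs_le]; constructor <;> linarith
  have hk1 : |(Sf v x t)^(γ/2)| ≤ r^γ := by
    rw [k1, abs_of_nonneg (Real.rpow_nonneg hrpos.le _)]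
  have hk2 : |(Sf v x t)^(γ/2-1)| ≤ r^(γ-2) := by
    rw [k2, abs_of_nonneg (Real.rpow_nonneg hrpos.le _)]
  have hk3 : |(Sf v x t)^(γ/2-1-1)| ≤ r^(γ-4) := by
    rw [k3, abs_of_nonneg (Real.rpow_nonneg hrpos.le _)]
  have hSd := Sd_abs_le v x t
  have hPf := Pf_abs_le v x i j t
  have hPd := Pd_abs_le v x i j t
  have hPdd := Pdd_abs_le x i j
  have h2X : |2*‖x‖^2| ≤ 2*X^2 := by rw [abs_of_nonneg (by positivity)]
  -- term bounds
  have ht1 : |(γ/2)*(γ/2-1)*(Sf v x t)^(γ/2-1-1)*(Sd v x t)*(Sd v x t)*(Pf v x i j t)|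
      ≤ 16 * X^2 * r^γ := by
    have := abs_mul_le_mul (abs_mul_le_mul (abs_mul_le_mul (abs_mul_le_mul
      (abs_mul_le_mul hg1 hg2) hk3) hSd) hSd) hPf
    calc |(γ/2)*(γ/2-1)*(Sf v x t)^(γ/2-1-1)*(Sd v x t)*(Sd v x t)*(Pf v x i j t)|
        ≤ 1*2*(r^(γ-4))*(2*r*X)*(2*r*X)*(2*r^2) := this
      _ = 16 * X^2 * (r^(γ-4) * r^4) := by ring
      _ = 16 * X^2 * r^γ := by rw [e4]
  have ht2 : |(γ/2)*(Sf v x t)^(γ/2-1)*(2*‖x‖^2)*(Pf v x i j t)| ≤ 4 * X^2 * r^γ := by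
    have := abs_mul_le_mul (abs_mul_le_mul (abs_mul_le_mul hg1 hk2) h2X) hPf
    calc |(γ/2)*(Sf v x t)^(γ/2-1)*(2*‖x‖^2)*(Pf v x i j t)|
        ≤ 1*(r^(γ-2))*(2*X^2)*(2*r^2) := this
      _ = 4 * X^2 * (r^(γ-2) * r^2) := by ring
      _ = 4 * X^2 * r^γ := by rw [e2]
  have ht3 : |2*((γ/2)*(Sf v x t)^(γ/2-1)*(Sd v x t))*(Pd v x i j t)| ≤ 16 * X^2 * r^γ := by
    have h2 : |(2:ℝ)| ≤ 2 := by norm_num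
    have := abs_mul_le_mul (abs_mul_le_mul h2
      (abs_mul_le_mul (abs_mul_le_mul hg1 hk2) hSd)) hPd
    calc |2*((γ/2)*(Sf v x t)^(γ/2-1)*(Sd v x t))*(Pd v x i j t)|
        ≤ 2*(1*(r^(γ-2))*(2*r*X))*(4*r*X) := this
      _ = 16 * X^2 * (r^(γ-2) * r^2) := by ring
      _ = 16 * X^2 * r^γ := by rw [e2]
  have ht4 : |(Sf v x t)^(γ/2)*(Pdd x i j)| ≤ 4 * X^2 * r^γ := by
    have := abs_mul_le_mul hk1 hPdd
    calc |(Sf v x t)^(γ/2)*(Pdd x i j)| ≤ r^γ * (4*X^2) := this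
      _ = 4 * X^2 * r^γ := by ring
  have hsplit : |Fdd γ v x i j t| ≤
      |(γ/2)*(γ/2-1)*(Sf v x t)^(γ/2-1-1)*(Sd v x t)*(Sd v x t)*(Pf v x i j t)|
      + |(γ/2)*(Sf v x t)^(γ/2-1)*(2*‖x‖^2)*(Pf v x i j t)|
      + |2*((γ/2)*(Sf v x t)^(γ/2-1)*(Sd v x t))*(Pd v x i j t)|
      + |(Sf v x t)^(γ/2)*(Pdd x i j)| := by
    unfold Fdd
    exact le_trans (abs_add_le _ _) (add_le_add (abs_add_three _ _ _) le_rfl)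
  linarith [ht1, ht2, ht3, ht4, hsplit]

lemma taylor_claim (hγ1 : -2 < γ) (hγ2 : γ < 0) (η : ℝ) (hη : 0 < η)
    (hv : 2*η < ‖v‖) (hx : ‖x‖ < η) :
    |aMat γ (v - x) i j - aMat γ v i j - Fd γ v x i j 0| ≤ 40 * η^2 * (‖v‖ - η)^γ := by
  have hρ : 0 < ‖v‖ - η := by linarith
  have hrt : ∀ t ∈ Set.Icc (0:ℝ) 1, ‖v‖ - η ≤ ‖v - t • x‖ := by
    intro t ht
    have h1 : ‖v‖ - ‖t • x‖ ≤ ‖v - t • x‖ := norm_sub_norm_le v (t • x)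
    have h2 : ‖t • x‖ ≤ η := by
      rw [norm_smul, Real.norm_eq_abs]
      have : |t| ≤ 1 := abs_le.mpr ⟨by linarith [ht.1], ht.2⟩
      nlinarith [norm_nonneg x, hx.le]
    linarith
  have hSne : ∀ t ∈ Set.Icc (0:ℝ) 1, Sf v x t ≠ 0 := by
    intro t ht
    rw [Sf_eq]
    have h := hrt t ht
    have hpos : 0 < ‖v - t • x‖ := lt_of_lt_of_le hρ h
    exact pow_ne_zero 2 hpos.ne'
  have hmain := taylor_bound (Ff γ v x i j) (Fd γ v x i j) (Fdd γ v x i j)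
    (40 * η^2 * (‖v‖ - η)^γ)
    (fun t ht => hasDerivAt_Ff γ v x i j t (hSne t ht))
    (fun t ht => hasDerivAt_Fd γ v x i j t (hSne t ht))
    (fun t ht => by
      have hb := Fdd_abs_le γ v x i j hγ1 hγ2 t (‖v‖ - η) hρ (hrt t ht)
      have h1 : ‖v - t • x‖^γ ≤ (‖v‖ - η)^γ :=
        Real.rpow_le_rpow_of_nonpos hρ (hrt t ht) hγ2.le
      have h2 : ‖x‖^2 ≤ η^2 := by nlinarith [norm_nonneg x, hx.le]
      have h3 : (0:ℝ) ≤ ‖v - t • x‖^γ := Real.rpow_nonneg (norm_nonneg _) _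
      nlinarith [Real.rpow_nonneg hρ.le γ, norm_nonneg x, sq_nonneg ‖x‖])
  have e1 : Ff γ v x i j 1 = aMat γ (v - x) i j := by rw [Ff_eq, one_smul]
  have e0 : Ff γ v x i j 0 = aMat γ v i j := by rw [Ff_eq, zero_smul, sub_zero]
  rw [e1, e0] at hmain
  exact hmain


lemma Fd_zero_eq :
    Fd γ v x i j 0 = (γ/2)*(‖v‖^2)^(γ/2-1)*(-2*(inner ℝ v x : ℝ))*(‖v‖^2*dd i j - v i * v j)
      + (‖v‖^2)^(γ/2)*((-2*(inner ℝ v x : ℝ))*dd i j + (x i * v j + v i * x j)) := by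
  have hS0 : Sf v x 0 = ‖v‖^2 := by unfold Sf; norm_num
  have hSd0 : Sd v x 0 = -2*(inner ℝ v x : ℝ) := by unfold Sd; norm_num
  unfold Fd Pf Pd
  rw [hS0, hSd0]
  ring

lemma Fd_zero_odd : Fd γ v (-x) i j 0 = - Fd γ v x i j 0 := by
  rw [Fd_zero_eq, Fd_zero_eq]
  simp only [inner_neg_right, PiLp.neg_apply]
  ring

lemma Fd_zero_continuous : Continuous fun x : EuclideanSpace ℝ (Fin 3) => Fd γ v x i j 0 := by
  have he : (fun x : EuclideanSpace ℝ (Fin 3) => Fd γ v x i j 0)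
      = fun x => (γ/2)*(‖v‖^2)^(γ/2-1)*(-2*(inner ℝ v x : ℝ))*(‖v‖^2*dd i j - v i * v j)
      + (‖v‖^2)^(γ/2)*((-2*(inner ℝ v x : ℝ))*dd i j + (x i * v j + v i * x j)) :=
    funext fun x => Fd_zero_eq γ v x i j
  rw [he]
  have hinner : Continuous fun x : EuclideanSpace ℝ (Fin 3) => (inner ℝ v x : ℝ) :=
    continuous_const.inner continuous_id
  have hcoord : ∀ k : Fin 3, Continuous fun x : EuclideanSpace ℝ (Fin 3) => x k :=
    fun k => (EuclideanSpace.proj k).continuous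
  exact ((continuous_const.mul (continuous_const.mul hinner)).mul continuous_const).add
    (continuous_const.mul ((continuous_const.mul hinner).mul continuous_const |>.add
      (((hcoord i).mul continuous_const).add (continuous_const.mul (hcoord j)))))

end St4

lemma phi_even (η : ℝ) (x : EuclideanSpace ℝ (Fin 3)) : phiMol η (-x) = phiMol η x := by
  simp [phiMol]

lemma abs_sub_le_abs_add_abs (a b : ℝ) : |a - b| ≤ |a| + |b| := by
  calc |a - b| = |a + -b| := by ring_nf
    _ ≤ |a| + |-b| := abs_add_le _ _
    _ = |a| + |b| := by rw [abs_neg]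

lemma entry_bound (γ : ℝ) (hγ : γ ∈ Set.Ioo (-2 : ℝ) 0) (η : ℝ) (hη : η ∈ Set.Ioo (0:ℝ) 1)
    (v : EuclideanSpace ℝ (Fin 3)) (i j : Fin 3) :
    |aConv γ η v i j - aMat γ v i j| ≤ 360 * η^2 * (η + ‖v‖)^γ := by
  obtain ⟨hγ1, hγ2⟩ := hγ
  obtain ⟨hη0, hη1⟩ := hη
  have hγne : γ ≠ 0 := ne_of_lt hγ2
  have h2γ : (0:ℝ) ≤ 2 + γ := by linarith
  have huv : (0:ℝ) < η + ‖v‖ := by have := norm_nonneg v; linarith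
  have huvγ : (0:ℝ) ≤ (η + ‖v‖)^γ := Real.rpow_nonneg huv.le γ
  have hA_meas := aMat_entry_measurable γ hγne v i j
  -- bound on entries of aMat on the ball
  have hAb : ∀ x : EuclideanSpace ℝ (Fin 3), ‖x‖ < η →
      |aMat γ (v - x) i j| ≤ 2*(‖v‖+η)^(2+γ) := by
    intro x hx
    calc |aMat γ (v - x) i j| ≤ 2 * ‖v - x‖ ^ (2+γ) := aMat_abs_le γ hγne (v - x) i j
      _ ≤ 2*(‖v‖+η)^(2+γ) := by
          have h1 : ‖v - x‖ ≤ ‖v‖ + η := le_trans (norm_sub_le v x) (by linarith)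
          have := Real.rpow_le_rpow (norm_nonneg _) h1 h2γ
          linarith
  have hint_A : Integrable (fun x => phiMol η x * aMat γ (v - x) i j) :=
    integrable_phi_mul η hη0 _ hA_meas _ hAb
  have hint_c : Integrable (fun x => phiMol η x * aMat γ v i j) :=
    integrable_phi_mul η hη0 _ measurable_const _ (fun x _ => le_refl |aMat γ v i j|)
  have hconv : aConv γ η v i j = ∫ x, phiMol η x * aMat γ (v - x) i j := rfl
  have hdiff : aConv γ η v i j - aMat γ v i j
      = ∫ x, phiMol η x * (aMat γ (v - x) i j - aMat γ v i j) := by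
    have he : (fun x => phiMol η x * (aMat γ (v - x) i j - aMat γ v i j))
        = fun x => phiMol η x * aMat γ (v - x) i j - phiMol η x * aMat γ v i j := by
      funext x; ring
    rw [he, integral_sub hint_A hint_c, integral_mul_const, integral_phi η hη0, one_mul, hconv]
  set D : EuclideanSpace ℝ (Fin 3) → ℝ :=
    fun x => aMat γ (v - x) i j - aMat γ v i j with hD
  have hD_meas : Measurable D := hA_meas.sub measurable_const
  have hvb : |aMat γ v i j| ≤ 2 * ‖v‖ ^ (2+γ) := aMat_abs_le γ hγne v i j
  have hDb : ∀ x : EuclideanSpace ℝ (Fin 3), ‖x‖ < η →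
      |D x| ≤ 2*(‖v‖+η)^(2+γ) + 2*‖v‖^(2+γ) := by
    intro x hx
    calc |D x| ≤ |aMat γ (v - x) i j| + |aMat γ v i j| := abs_sub_le_abs_add_abs _ _
      _ ≤ 2*(‖v‖+η)^(2+γ) + 2*‖v‖^(2+γ) := add_le_add (hAb x hx) hvb
  by_cases hcase : ‖v‖ ≤ 2*η
  · -- region |v| ≤ 2η
    have h3η : (0:ℝ) < 3*η := by linarith
    have hb1 : (‖v‖+η)^(2+γ) ≤ (3*η)^(2+γ) :=
      Real.rpow_le_rpow (by positivity) (by linarith) h2γ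
    have hb2 : ‖v‖^(2+γ) ≤ (3*η)^(2+γ) :=
      Real.rpow_le_rpow (norm_nonneg v) (by linarith) h2γ
    have hb3 : (3*η)^(2+γ) = 3^(2+γ) * η^(2+γ) := Real.mul_rpow (by norm_num) hη0.le
    have hb4 : (3:ℝ)^(2+γ) ≤ 9 := by
      calc (3:ℝ)^(2+γ) ≤ (3:ℝ)^(2:ℝ) :=
            Real.rpow_le_rpow_of_exponent_le (by norm_num) (by linarith)
        _ = 9 := by
            rw [show (2:ℝ) = ((2:ℕ):ℝ) by norm_num, Real.rpow_natCast]; norm_num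
    have hb5 : η^(2+γ) = η^2 * η^γ := by
      rw [Real.rpow_add hη0, ← Real.rpow_natCast η 2]
      norm_num
    have hb6 : η^γ ≤ 9 * (η + ‖v‖)^γ :=
      rpow_base_le γ hγ1.le hγ2.le η (η + ‖v‖) hη0 huv (by linarith)
    have hb7 : (0:ℝ) ≤ η^(2+γ) := Real.rpow_nonneg hη0.le _
    have hb8 : (0:ℝ) ≤ (3*η)^(2+γ) := Real.rpow_nonneg h3η.le _
    have hb9 : (0:ℝ) ≤ η^γ := Real.rpow_nonneg hη0.le _
    have hM : ∀ x : EuclideanSpace ℝ (Fin 3), ‖x‖ < η →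
        |D x| ≤ 360 * η^2 * (η + ‖v‖)^γ := by
      intro x hx
      have := hDb x hx
      have hchain : 2*(‖v‖+η)^(2+γ) + 2*‖v‖^(2+γ) ≤ 4 * (3*η)^(2+γ) := by linarith
      have hc2 : (4:ℝ) * (3*η)^(2+γ) ≤ 36 * η^(2+γ) := by
        rw [hb3] at hchain ⊢
        nlinarith
      have hc3 : (36:ℝ) * η^(2+γ) ≤ 324 * (η^2 * (η+‖v‖)^γ) := by
        rw [hb5]
        nlinarith [sq_nonneg η]
      calc |D x| ≤ 4 * (3*η)^(2+γ) := le_trans this hchain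
        _ ≤ 324 * (η^2 * (η+‖v‖)^γ) := le_trans hc2 hc3
        _ ≤ 360 * η^2 * (η + ‖v‖)^γ := by nlinarith [sq_nonneg η]
    rw [hdiff]
    exact le_trans (abs_integral_phi_mul_le η hη0 D hD_meas _ hM) (le_refl _)
  · -- region |v| > 2η
    push_neg at hcase
    have hρ : (0:ℝ) < ‖v‖ - η := by linarith
    set L : EuclideanSpace ℝ (Fin 3) → ℝ := fun x => St4.Fd γ v x i j 0 with hL
    have hT : ∀ x : EuclideanSpace ℝ (Fin 3), ‖x‖ < η →
        |D x - L x| ≤ 40 * η^2 * (‖v‖-η)^γ := by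
      intro x hx
      have := St4.taylor_claim γ v x i j hγ1 hγ2 η hη0 hcase hx
      calc |D x - L x| = |aMat γ (v - x) i j - aMat γ v i j - St4.Fd γ v x i j 0| := rfl
        _ ≤ 40 * η^2 * (‖v‖-η)^γ := this
    have hL_meas : Measurable L := (St4.Fd_zero_continuous γ v i j).measurable
    have hLb : ∀ x : EuclideanSpace ℝ (Fin 3), ‖x‖ < η →
        |L x| ≤ (2*(‖v‖+η)^(2+γ) + 2*‖v‖^(2+γ)) + 40 * η^2 * (‖v‖-η)^γ := by
      intro x hx
      calc |L x| = |D x - (D x - L x)| := by ring_nf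
        _ ≤ |D x| + |D x - L x| := abs_sub_le_abs_add_abs _ _
        _ ≤ (2*(‖v‖+η)^(2+γ) + 2*‖v‖^(2+γ)) + 40 * η^2 * (‖v‖-η)^γ :=
            add_le_add (hDb x hx) (hT x hx)
    have hint_DL : Integrable (fun x => phiMol η x * (D x - L x)) :=
      integrable_phi_mul η hη0 _ (hD_meas.sub hL_meas) _ hT
    have hint_L : Integrable (fun x => phiMol η x * L x) :=
      integrable_phi_mul η hη0 _ hL_meas _ hLb
    have hzero : ∫ x, phiMol η x * L x = 0 := by
      apply integral_odd_eq_zero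
      intro x
      rw [phi_even, hL]
      simp only
      rw [St4.Fd_zero_odd γ v x i j]
      ring
    have hsplit : ∫ x, phiMol η x * D x
        = (∫ x, phiMol η x * (D x - L x)) + ∫ x, phiMol η x * L x := by
      rw [← integral_add hint_DL hint_L]
      congr 1
      funext x
      ring
    rw [hdiff]
    have : (∫ x, phiMol η x * D x) = ∫ x, phiMol η x * (D x - L x) := by
      rw [hsplit, hzero, add_zero]
    rw [show (∫ x, phiMol η x * (aMat γ (v - x) i j - aMat γ v i j))
        = ∫ x, phiMol η x * D x from rfl, this]
    have hmain := abs_integral_phi_mul_le η hη0 _ (hD_meas.sub hL_meas) _ hT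
    have hb6 : (‖v‖-η)^γ ≤ 9 * (η + ‖v‖)^γ :=
      rpow_base_le γ hγ1.le hγ2.le (‖v‖-η) (η + ‖v‖) hρ huv (by linarith)
    calc |∫ x, phiMol η x * (D x - L x)| ≤ 40 * η^2 * (‖v‖-η)^γ := hmain
      _ ≤ 360 * η^2 * (η + ‖v‖)^γ := by nlinarith [sq_nonneg η, Real.rpow_nonneg hρ.le γ]

theorem statement4 (γ : ℝ) (hγ : γ ∈ Set.Ioo (-2 : ℝ) 0) :
    ∃ C : ℝ, 0 < C ∧ ∀ η ∈ Set.Ioo (0 : ℝ) 1, ∀ v : EuclideanSpace ℝ (Fin 3),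
      frob (aConv γ η v - aMat γ v) ≤ C * η ^ 2 * (η + ‖v‖) ^ γ := by
  refine ⟨1080, by norm_num, fun η hη v => ?_⟩
  have hη0 := hη.1
  have huv : (0:ℝ) < η + ‖v‖ := by have := norm_nonneg v; linarith
  have hK : (0:ℝ) ≤ 360 * η^2 * (η + ‖v‖)^γ := by
    have := Real.rpow_nonneg huv.le γ
    positivity
  have h := frob_le (aConv γ η v - aMat γ v) (360 * η^2 * (η + ‖v‖)^γ) hK
    (fun i j => by
      rw [Matrix.sub_apply]
      exact entry_bound γ hγ η hη v i j)
  calc frob (aConv γ η v - aMat γ v) ≤ 3 * (360 * η^2 * (η + ‖v‖)^γ) := h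
    _ = 1080 * η ^ 2 * (η + ‖v‖) ^ γ := by ring
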